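/- Let B_0 ∈ ℂ^{m×m} be invertible and symmetric, and let Z_1, Z_2, … ∈ ℂ^{m×m} be skew-symmetric (Z_nᵀ = −Z_n). Define V_0 := I_m, V_1 := (1/2)B_0^{-1}Z_1 and V_{n+1} := (1/2)B_0^{-1}( Z_{n+1} − Σ_{j=1}^{n} V_jᵀ B_0 V_{n+1−j} ) for n ≥ 1. Then for every n ≥ 1: Σ_{j=0}^{n} V_jᵀ B_0 V_{n−j} = 0. Equivalently, for every α ≥ 1 the block upper-triangular Toeplitz matrix 𝒱 := T(I_m, V_1, …, V_{α−1}) satisfies E_α(I_m)·𝒱ᵀ·E_α(I_m)·(⊕_{i=1}^{α} B_0)·𝒱 = ⊕_{i=1}^{α} B_0. -/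
import Mathlib


open Matrix

noncomputable section

/-- Form (0T0): block matrix partitioned by Jordan structure `(α, m)` whose `(r,s)` block,
viewed as an `α r × α s` array of `m r × m s` blocks, is a rectangular block
upper-triangular Toeplitz matrix aligned to the top-right corner. -/
def IsForm0T0 {N : ℕ} (α m : Fin N → ℕ)
    (X : Matrix (Σ r : Fin N, Fin (α r) × Fin (m r)) (Σ r : Fin N, Fin (α r) × Fin (m r)) ℂ) :
    Prop :=
  ∃ A : ∀ r s : Fin N, ℕ → Matrix (Fin (m r)) (Fin (m s)) ℂ,
    ∀ (r s : Fin N) (i : Fin (α r)) (j : Fin (α s)) (a : Fin (m r)) (b : Fin (m s)),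
      X ⟨r, (i, a)⟩ ⟨s, (j, b)⟩ =
        if (i : ℕ) + (α s - min (α r) (α s)) ≤ (j : ℕ) then
          A r s ((j : ℕ) - (i : ℕ) - (α s - min (α r) (α s))) a b
        else 0

/-- `E_b(I_m)`: the `bm × bm` block matrix with `I_m` on the block anti-diagonal. -/
def revE (b m : ℕ) : Matrix (Fin b × Fin m) (Fin b × Fin m) ℂ :=
  Matrix.of fun p q => if (p.1 : ℕ) + (q.1 : ℕ) + 1 = b ∧ p.2 = q.2 then 1 else 0

/-- `F = ⊕_r E_{α r}(I_{m r})`. -/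
def bigF {N : ℕ} (α m : Fin N → ℕ) :
    Matrix (Σ r : Fin N, Fin (α r) × Fin (m r)) (Σ r : Fin N, Fin (α r) × Fin (m r)) ℂ :=
  Matrix.blockDiagonal' fun r => revE (α r) (m r)

/-- The `n × n` upper-triangular Jordan block `J_n(λ)`. -/
def Jmat (n : ℕ) (lam : ℂ) : Matrix (Fin n) (Fin n) ℂ :=
  Matrix.of fun i j => if (j : ℕ) = (i : ℕ) then lam else if (j : ℕ) = (i : ℕ) + 1 then 1 else 0

/-- The `n × n` backward identity matrix `E_n`. -/
def ErevC (n : ℕ) : Matrix (Fin n) (Fin n) ℂ :=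
  Matrix.of fun i j => if (i : ℕ) + (j : ℕ) + 1 = n then 1 else 0

/-- `P_n = (1/√2)(I + i E_n)`. -/
noncomputable def Pmat (n : ℕ) : Matrix (Fin n) (Fin n) ℂ :=
  (Real.sqrt 2 : ℂ)⁻¹ • (1 + Complex.I • ErevC n)

/-- `P_n⁻¹ = (1/√2)(I − i E_n)`. -/
noncomputable def PmatInv (n : ℕ) : Matrix (Fin n) (Fin n) ℂ :=
  (Real.sqrt 2 : ℂ)⁻¹ • (1 - Complex.I • ErevC n)

/-- The symmetric canonical form `K_n(λ) = P_n J_n(λ) P_n⁻¹` of a Jordan block. -/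
noncomputable def Kmat (n : ℕ) (lam : ℂ) : Matrix (Fin n) (Fin n) ℂ :=
  Pmat n * Jmat n lam * PmatInv n

/-- `T(A_0, …)`: the `β × β` block upper-triangular Toeplitz matrix with blocks `A_j`. -/
def blkToeplitz (β p q : ℕ) (A : ℕ → Matrix (Fin p) (Fin q) ℂ) :
    Matrix (Fin β × Fin p) (Fin β × Fin q) ℂ :=
  Matrix.of fun x y =>
    if (x.1 : ℕ) ≤ (y.1 : ℕ) then A ((y.1 : ℕ) - (x.1 : ℕ)) x.2 y.2 else 0

/-- The `(i,i)`-th `m r × m r` entry-block of the `(r,r)` diagonal block of `X`; for a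
matrix of form (0T0) this is the leading Toeplitz coefficient `A^{rr}_0`. -/
def diagLead {N : ℕ} (α m : Fin N → ℕ)
    (X : Matrix (Σ r : Fin N, Fin (α r) × Fin (m r)) (Σ r : Fin N, Fin (α r) × Fin (m r)) ℂ)
    (r : Fin N) (i : Fin (α r)) : Matrix (Fin (m r)) (Fin (m r)) ℂ :=
  Matrix.of fun a b => X ⟨r, (i, a)⟩ ⟨r, (i, b)⟩

/-- The space of skew-symmetric matrices commuting with `S`. -/
def skewCommSubmodule (ι : Type*) [Fintype ι] [DecidableEq ι] (S : Matrix ι ι ℂ) :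
    Submodule ℂ (Matrix ι ι ℂ) where
  carrier := {X | Xᵀ = -X ∧ X * S = S * X}
  add_mem' := by
    rintro a b ⟨ha1, ha2⟩ ⟨hb1, hb2⟩
    refine ⟨?_, ?_⟩
    · rw [Matrix.transpose_add, ha1, hb1, neg_add]
    · rw [add_mul, mul_add, ha2, hb2]
  zero_mem' := by
    refine ⟨?_, ?_⟩
    · simp
    · simp
  smul_mem' := by
    rintro c a ⟨h1, h2⟩
    refine ⟨?_, ?_⟩
    · rw [Matrix.transpose_smul, h1, smul_neg]
    · rw [Matrix.smul_mul, Matrix.mul_smul, h2]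

/-- The isotropy group (as a set) of `S` under orthogonal similarity. -/
def sigmaSet {ι : Type*} [Fintype ι] [DecidableEq ι] (S : Matrix ι ι ℂ) : Set (Matrix ι ι ℂ) :=
  {Q | Qᵀ * Q = 1 ∧ Qᵀ * S * Q = S}


lemma aux_revE_mul {α m : ℕ} (X : Matrix (Fin α × Fin m) (Fin α × Fin m) ℂ)
    (p q : Fin α × Fin m) : (revE α m * X) p q = X (p.1.rev, p.2) q := by
  rw [Matrix.mul_apply]
  rw [Finset.sum_eq_single (p.1.rev, p.2)]
  · have h1 : revE α m p (p.1.rev, p.2) = 1 := by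
      have := p.1.isLt
      simp only [revE, of_apply, Fin.val_rev]
      rw [if_pos ⟨by omega, trivial⟩]
    rw [h1, one_mul]
  · intro z _ hz
    have h0 : revE α m p z = 0 := by
      simp only [revE, of_apply]
      rw [if_neg]
      rintro ⟨h1, h2⟩
      exact hz (Prod.ext (Fin.ext (by have := p.1.isLt; simp [Fin.val_rev]; omega)).symm h2.symm)
    rw [h0, zero_mul]
  · intro h; exact absurd (Finset.mem_univ _) h

lemma aux_mul_revE {α m : ℕ} (X : Matrix (Fin α × Fin m) (Fin α × Fin m) ℂ)
    (p q : Fin α × Fin m) : (X * revE α m) p q = X p (q.1.rev, q.2) := by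
  rw [Matrix.mul_apply]
  rw [Finset.sum_eq_single (q.1.rev, q.2)]
  · have h1 : revE α m (q.1.rev, q.2) q = 1 := by
      have := q.1.isLt
      simp only [revE, of_apply, Fin.val_rev]
      rw [if_pos ⟨by omega, trivial⟩]
    rw [h1, mul_one]
  · intro z _ hz
    have h0 : revE α m z q = 0 := by
      simp only [revE, of_apply]
      rw [if_neg]
      rintro ⟨h1, h2⟩
      exact hz (Prod.ext (Fin.ext (by have := q.1.isLt; simp [Fin.val_rev]; omega)) h2)
    rw [h0, mul_zero]
  · intro h; exact absurd (Finset.mem_univ _) h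

lemma aux_FTF {α m : ℕ} (V : ℕ → Matrix (Fin m) (Fin m) ℂ) :
    revE α m * (blkToeplitz α m m V)ᵀ * revE α m
      = blkToeplitz α m m (fun n => (V n)ᵀ) := by
  ext p q
  rw [aux_mul_revE, aux_revE_mul, Matrix.transpose_apply]
  simp only [blkToeplitz, of_apply, Matrix.transpose_apply]
  have hi := p.1.isLt
  have hj := q.1.isLt
  by_cases h : (p.1 : ℕ) ≤ (q.1 : ℕ)
  · rw [if_pos (by simp [Fin.val_rev]; omega), if_pos h]
    congr 1
    simp [Fin.val_rev]; omega
  · rw [if_neg (by simp [Fin.val_rev]; omega), if_neg h]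

lemma aux_diag_mul_blkT {α m : ℕ} (B0 : Matrix (Fin m) (Fin m) ℂ)
    (V : ℕ → Matrix (Fin m) (Fin m) ℂ) :
    (Matrix.of fun p q : Fin α × Fin m => if p.1 = q.1 then B0 p.2 q.2 else 0) *
        blkToeplitz α m m V = blkToeplitz α m m (fun n => B0 * V n) := by
  ext p q
  rw [Matrix.mul_apply, Fintype.sum_prod_type]
  have step : ∀ l : Fin α,
      (∑ d : Fin m, (Matrix.of fun p q : Fin α × Fin m =>
          if p.1 = q.1 then B0 p.2 q.2 else 0) p (l, d) * blkToeplitz α m m V (l, d) q)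
      = if p.1 = l then ∑ d : Fin m, B0 p.2 d * blkToeplitz α m m V (l, d) q else 0 := by
    intro l
    split_ifs with h
    · simp [h]
    · simp [of_apply, h]
  simp only [step]
  rw [Finset.sum_ite_eq Finset.univ p.1, if_pos (Finset.mem_univ _)]
  simp only [blkToeplitz, of_apply]
  split_ifs with h
  · rw [Matrix.mul_apply]
  · simp

lemma aux_blkT_mul {α m : ℕ} (B0 : Matrix (Fin m) (Fin m) ℂ)
    (W U : ℕ → Matrix (Fin m) (Fin m) ℂ)
    (hkey : ∀ n, ∑ d ∈ Finset.range (n + 1), W d * B0 * U (n - d)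
        = if n = 0 then B0 else 0) :
    blkToeplitz α m m W * blkToeplitz α m m (fun n => B0 * U n)
      = Matrix.of fun p q : Fin α × Fin m => if p.1 = q.1 then B0 p.2 q.2 else 0 := by
  ext p q
  rw [Matrix.mul_apply, Fintype.sum_prod_type]
  have hj := q.1.isLt
  have step : ∀ k : Fin α,
      (∑ c : Fin m, blkToeplitz α m m W p (k, c) *
          blkToeplitz α m m (fun n => B0 * U n) (k, c) q)
      = if (p.1 : ℕ) ≤ (k : ℕ) ∧ (k : ℕ) ≤ (q.1 : ℕ)
          then (W ((k : ℕ) - (p.1 : ℕ)) * (B0 * U ((q.1 : ℕ) - (k : ℕ)))) p.2 q.2 else 0 := by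
    intro k
    simp only [blkToeplitz, of_apply]
    by_cases h1 : (p.1 : ℕ) ≤ (k : ℕ) <;> by_cases h2 : (k : ℕ) ≤ (q.1 : ℕ) <;>
      simp [h1, h2, Matrix.mul_apply, Finset.mul_sum]
  simp only [step]
  have hfin : (∑ k : Fin α, if (p.1 : ℕ) ≤ (k : ℕ) ∧ (k : ℕ) ≤ (q.1 : ℕ)
        then (W ((k : ℕ) - (p.1 : ℕ)) * (B0 * U ((q.1 : ℕ) - (k : ℕ)))) p.2 q.2 else 0)
      = ∑ n ∈ Finset.Icc (p.1 : ℕ) (q.1 : ℕ),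
          (W (n - (p.1 : ℕ)) * (B0 * U ((q.1 : ℕ) - n))) p.2 q.2 := by
    rw [Fin.sum_univ_eq_sum_range
      (fun n => if (p.1 : ℕ) ≤ n ∧ n ≤ (q.1 : ℕ)
        then (W (n - (p.1 : ℕ)) * (B0 * U ((q.1 : ℕ) - n))) p.2 q.2 else 0) α]
    rw [← Finset.sum_filter]
    apply Finset.sum_congr
    · ext n
      simp only [Finset.mem_filter, Finset.mem_range, Finset.mem_Icc]
      omega
    · intros; rfl
  rw [hfin]
  rcases le_or_gt (p.1 : ℕ) (q.1 : ℕ) with h | h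
  · rw [show Finset.Icc (p.1 : ℕ) (q.1 : ℕ) = Finset.Ico (p.1 : ℕ) ((q.1 : ℕ) + 1) from
      (Finset.Ico_add_one_right_eq_Icc _ _).symm]
    rw [Finset.sum_Ico_eq_sum_range]
    rw [show (q.1 : ℕ) + 1 - (p.1 : ℕ) = ((q.1 : ℕ) - (p.1 : ℕ)) + 1 from by omega]
    have hterm : ∀ k ∈ Finset.range (((q.1 : ℕ) - (p.1 : ℕ)) + 1),
        (W ((p.1 : ℕ) + k - (p.1 : ℕ)) * (B0 * U ((q.1 : ℕ) - ((p.1 : ℕ) + k)))) p.2 q.2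
        = (W k * B0 * U (((q.1 : ℕ) - (p.1 : ℕ)) - k)) p.2 q.2 := by
      intro k _
      rw [Nat.add_sub_cancel_left, mul_assoc,
        show (q.1 : ℕ) - ((p.1 : ℕ) + k) = ((q.1 : ℕ) - (p.1 : ℕ)) - k from by omega]
    rw [Finset.sum_congr rfl hterm, ← Matrix.sum_apply, hkey]
    simp only [of_apply]
    by_cases he : p.1 = q.1
    · rw [if_pos he, if_pos (by rw [he]; omega)]
    · rw [if_neg (by intro h0; exact he (Fin.ext (by omega))), if_neg he]
      simp
  · rw [Finset.Icc_eq_empty (by omega), Finset.sum_empty]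
    simp only [of_apply]
    rw [if_neg (by intro h0; rw [h0] at h; omega)]

/-- With `B_0` invertible symmetric, `Z_n` skew-symmetric, `V_0 = I`,
`V_1 = ½B_0⁻¹Z_1` and `V_{n+1} = ½B_0⁻¹(Z_{n+1} − Σ_{j=1}^n V_jᵀ B_0 V_{n+1−j})`, one has
`Σ_{j=0}^n V_jᵀ B_0 V_{n−j} = 0` for all `n ≥ 1`; equivalently, for every `α ≥ 1` the
block Toeplitz matrix `𝒱 = T(I, V_1, …, V_{α−1})` satisfies
`E_α(I_m)·𝒱ᵀ·E_α(I_m)·(⊕ B_0)·𝒱 = ⊕ B_0`. -/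
theorem stmt13 (m : ℕ) (hm : 1 ≤ m)
    (B0 : Matrix (Fin m) (Fin m) ℂ) (hB0 : IsUnit B0) (hB0sym : B0ᵀ = B0)
    (Z V : ℕ → Matrix (Fin m) (Fin m) ℂ)
    (hZ : ∀ n, 1 ≤ n → (Z n)ᵀ = -Z n)
    (hV0 : V 0 = 1)
    (hV1 : V 1 = (2 : ℂ)⁻¹ • (B0⁻¹ * Z 1))
    (hVrec : ∀ n, 1 ≤ n →
      V (n + 1) = (2 : ℂ)⁻¹ •
        (B0⁻¹ * (Z (n + 1) - ∑ j ∈ Finset.Icc 1 n, (V j)ᵀ * B0 * V (n + 1 - j)))) :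
    (∀ n, 1 ≤ n → ∑ j ∈ Finset.range (n + 1), (V j)ᵀ * B0 * V (n - j) = 0) ∧
    (∀ α, 1 ≤ α →
      revE α m * (blkToeplitz α m m V)ᵀ * revE α m *
          (Matrix.of fun p q : Fin α × Fin m => if p.1 = q.1 then B0 p.2 q.2 else 0) *
          blkToeplitz α m m V =
        Matrix.of fun p q : Fin α × Fin m => if p.1 = q.1 then B0 p.2 q.2 else 0) := by
  have key : ∀ n, ∑ j ∈ Finset.range (n + 1), (V j)ᵀ * B0 * V (n - j)
      = if n = 0 then B0 else 0 := by
    have hdet : IsUnit B0.det := (Matrix.isUnit_iff_isUnit_det B0).mp hB0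
    have hBinv : ∀ X : Matrix (Fin m) (Fin m) ℂ, B0 * (B0⁻¹ * X) = X := by
      intro X
      rw [← mul_assoc, Matrix.mul_nonsing_inv B0 hdet, one_mul]
    set M : ℕ → Matrix (Fin m) (Fin m) ℂ :=
      fun n => ∑ j ∈ Finset.Icc 1 (n - 1), (V j)ᵀ * B0 * V (n - j) with hM
    have hB0V : ∀ n, 1 ≤ n → B0 * V n = (2 : ℂ)⁻¹ • (Z n - M n) := by
      intro n hn
      match n, hn with
      | 1, _ =>
        rw [hV1, Matrix.mul_smul, hBinv]
        congr 1
        simp [hM]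
      | (k + 2), _ =>
        rw [hVrec (k + 1) (by omega), Matrix.mul_smul, hBinv]
        rfl
    have hMsym : ∀ n, (M n)ᵀ = M n := by
      intro n
      rw [hM]
      simp only [Matrix.transpose_sum, Matrix.transpose_mul, Matrix.transpose_transpose, hB0sym,
        ← mul_assoc]
      refine Finset.sum_nbij' (fun j => n - j) (fun j => n - j) ?_ ?_ ?_ ?_ ?_
      · intro a ha
        simp only [Finset.mem_Icc] at *
        omega
      · intro a ha
        simp only [Finset.mem_Icc] at *
        omega
      · intro a ha
        simp only [Finset.mem_Icc] at ha
        show n - (n - a) = a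
        omega
      · intro a ha
        simp only [Finset.mem_Icc] at ha
        show n - (n - a) = a
        omega
      · intro a ha
        simp only [Finset.mem_Icc] at ha
        rw [show n - (n - a) = a from by omega]
    intro n
    rcases Nat.eq_zero_or_pos n with rfl | hn
    · simp [hV0, hB0sym]
    · rw [if_neg (by omega)]
      have h1 : Finset.range (n + 1) = insert 0 (Finset.Icc 1 n) := by
        ext x; simp; omega
      have h2 : Finset.Icc 1 n = insert n (Finset.Icc 1 (n - 1)) := by
        ext x; simp; omega
      rw [h1, Finset.sum_insert (by simp), h2,
        Finset.sum_insert (by simp only [Finset.mem_Icc]; omega)]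
      have e0 : (V 0)ᵀ * B0 * V (n - 0) = B0 * V n := by
        rw [hV0, Matrix.transpose_one, one_mul, Nat.sub_zero]
      have en : (V n)ᵀ * B0 * V (n - n) = (B0 * V n)ᵀ := by
        rw [Nat.sub_self, hV0, mul_one, Matrix.transpose_mul, hB0sym]
      have emid : ∑ j ∈ Finset.Icc 1 (n - 1), (V j)ᵀ * B0 * V (n - j) = M n := rfl
      rw [e0, en, emid, hB0V n hn]
      rw [Matrix.transpose_smul, Matrix.transpose_sub, hZ n hn, hMsym]
      module
  constructor
  · intro n hn
    rw [key n, if_neg (by omega)]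
  · intro α hα
    rw [aux_FTF, mul_assoc, aux_diag_mul_blkT, aux_blkT_mul B0 (fun n => (V n)ᵀ) V key]
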